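/- Let b > 0 and ω ∈ (0, π), and define g_ω : ℝ → ℝ by g_ω(x) = (π/ω)·sinh(ωx/b)/sinh(πx/b) for x ≠ 0 and g_ω(0) = 1. Then g_ω is a positive-definite function: for every n ∈ ℕ, all points x_1, …, x_n ∈ ℝ and all complex numbers c_1, …, c_n, one has ∑_{i=1}^{n} ∑_{j=1}^{n} c_i·conj(c_j)·g_ω(x_i − x_j) ≥ 0 (the double sum is a nonnegative real number). -/

import Mathlib

open Real
open scoped ComplexOrder

open Finset Filter Topology MeasureTheory in
/-- `f` is a positive (semi)definite kernel on the points `x`. -/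
def MyPD (n : ℕ) (x : Fin n → ℝ) (f : ℝ → ℝ) : Prop :=
  (∀ t, f (-t) = f t) ∧ ∀ v : Fin n → ℝ, 0 ≤ ∑ i, ∑ j, v i * v j * f (x i - x j)

section aux

open Finset Filter Topology MeasureTheory Matrix

variable {n : ℕ}

lemma sq_sum_helper (a : Fin n → ℝ) {c : ℝ} (hc : 0 ≤ c) :
    0 ≤ ∑ i, ∑ j, c * (a i * a j) := by
  have h : c * ((∑ i, a i) * (∑ i, a i)) = ∑ i, ∑ j, c * (a i * a j) := by
    rw [Finset.sum_mul_sum, Finset.mul_sum]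
    exact Finset.sum_congr rfl fun i _ => by rw [Finset.mul_sum]
  rw [← h]
  exact mul_nonneg hc (mul_self_nonneg _)

lemma myPD_congr {x : Fin n → ℝ} {f f' : ℝ → ℝ} (h : MyPD n x f) (e : ∀ t, f t = f' t) :
    MyPD n x f' := by
  obtain ⟨h1, h2⟩ := h
  refine ⟨fun t => by rw [← e, ← e, h1], fun v => ?_⟩
  simpa only [e] using h2 v

lemma myPD_const (x : Fin n → ℝ) {c : ℝ} (hc : 0 ≤ c) : MyPD n x (fun _ => c) := by
  refine ⟨fun _ => rfl, fun v => ?_⟩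
  have h : ∑ i, ∑ j, v i * v j * c = ∑ i, ∑ j, c * (v i * v j) :=
    Finset.sum_congr rfl fun i _ => Finset.sum_congr rfl fun j _ => by ring
  rw [h]
  exact sq_sum_helper v hc

lemma myPD_add {x : Fin n → ℝ} {f g : ℝ → ℝ} (hf : MyPD n x f) (hg : MyPD n x g) :
    MyPD n x (fun t => f t + g t) := by
  refine ⟨fun t => by show f (-t) + g (-t) = f t + g t; rw [hf.1, hg.1], fun v => ?_⟩
  have h : ∑ i, ∑ j, v i * v j * (f (x i - x j) + g (x i - x j))
      = (∑ i, ∑ j, v i * v j * f (x i - x j)) + ∑ i, ∑ j, v i * v j * g (x i - x j) := by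
    rw [← Finset.sum_add_distrib]
    refine Finset.sum_congr rfl fun i _ => ?_
    rw [← Finset.sum_add_distrib]
    exact Finset.sum_congr rfl fun j _ => by ring
  rw [h]
  exact add_nonneg (hf.2 v) (hg.2 v)

lemma myPD_smul {x : Fin n → ℝ} {f : ℝ → ℝ} {c : ℝ} (hc : 0 ≤ c) (hf : MyPD n x f) :
    MyPD n x (fun t => c * f t) := by
  refine ⟨fun t => by show c * f (-t) = c * f t; rw [hf.1], fun v => ?_⟩
  have h : ∑ i, ∑ j, v i * v j * (c * f (x i - x j))
      = c * ∑ i, ∑ j, v i * v j * f (x i - x j) := by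
    rw [Finset.mul_sum]
    refine Finset.sum_congr rfl fun i _ => ?_
    rw [Finset.mul_sum]
    exact Finset.sum_congr rfl fun j _ => by ring
  rw [h]
  exact mul_nonneg hc (hf.2 v)

lemma myPD_gauss (x : Fin n → ℝ) {s : ℝ} (hs : 0 ≤ s) :
    MyPD n x (fun t => Real.exp (-(s * t ^ 2))) := by
  refine ⟨fun t => by show Real.exp (-(s * (-t) ^ 2)) = _; rw [neg_sq], fun v => ?_⟩
  set w : Fin n → ℝ := fun i => v i * Real.exp (-(s * x i ^ 2)) with hw
  have hsumm : ∀ i j : Fin n,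
      Summable (fun k : ℕ => (2 * s) ^ k / (Nat.factorial k : ℝ) * ((w i * x i ^ k) * (w j * x j ^ k))) := by
    intro i j
    refine ((Real.summable_pow_div_factorial (2 * s * x i * x j)).mul_left (w i * w j)).congr
      fun k => ?_
    simp only [hw]
    ring
  have key : ∀ i j : Fin n, v i * v j * Real.exp (-(s * (x i - x j) ^ 2))
      = ∑' k : ℕ, (2 * s) ^ k / (Nat.factorial k : ℝ) * ((w i * x i ^ k) * (w j * x j ^ k)) := by
    intro i j
    have h1 : Real.exp (2 * s * x i * x j) = ∑' k : ℕ, (2 * s * x i * x j) ^ k / (Nat.factorial k : ℝ) := by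
      rw [Real.exp_eq_exp_ℝ, NormedSpace.exp_eq_tsum_div]
    have h2 : -(s * (x i - x j) ^ 2) = -(s * x i ^ 2) + (-(s * x j ^ 2) + 2 * s * x i * x j) := by
      ring
    rw [h2, Real.exp_add, Real.exp_add, h1]
    rw [← tsum_mul_left, ← tsum_mul_left, ← tsum_mul_left]
    refine tsum_congr fun k => ?_
    simp only [hw]
    ring
  calc ∑ i, ∑ j, v i * v j * Real.exp (-(s * (x i - x j) ^ 2))
      = ∑ i, ∑ j, ∑' k : ℕ, (2 * s) ^ k / (Nat.factorial k : ℝ) * ((w i * x i ^ k) * (w j * x j ^ k)) :=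
        Finset.sum_congr rfl fun i _ => Finset.sum_congr rfl fun j _ => key i j
    _ = ∑' k : ℕ, ∑ i, ∑ j, (2 * s) ^ k / (Nat.factorial k : ℝ) * ((w i * x i ^ k) * (w j * x j ^ k)) := by
        rw [Summable.tsum_finsetSum (fun i _ => summable_sum fun j _ => hsumm i j)]
        exact Finset.sum_congr rfl fun i _ => (Summable.tsum_finsetSum fun j _ => hsumm i j).symm
    _ ≥ 0 := by
        refine tsum_nonneg fun k => ?_
        have hc : 0 ≤ (2 * s) ^ k / (Nat.factorial k : ℝ) := by positivity
        exact sq_sum_helper (fun i => w i * x i ^ k) hc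

lemma myPD_inv (x : Fin n → ℝ) {d : ℝ} (hd : 0 < d) :
    MyPD n x (fun t => 1 / (d ^ 2 + t ^ 2)) := by
  refine ⟨fun t => by show 1 / (d ^ 2 + (-t) ^ 2) = _; rw [neg_sq], fun v => ?_⟩
  have key : ∀ t : ℝ, 1 / (d ^ 2 + t ^ 2)
      = ∫ s in Set.Ioi (0 : ℝ), Real.exp (-(d ^ 2 * s)) * Real.exp (-(s * t ^ 2)) := by
    intro t
    have hpos : 0 < d ^ 2 + t ^ 2 := by positivity
    have he : Set.EqOn (fun s : ℝ => Real.exp (-(d ^ 2 * s)) * Real.exp (-(s * t ^ 2)))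
        (fun s : ℝ => Real.exp (-((d ^ 2 + t ^ 2) * s))) (Set.Ioi 0) := by
      intro s _
      simp only
      rw [← Real.exp_add]
      ring_nf
    rw [MeasureTheory.setIntegral_congr_fun measurableSet_Ioi he]
    have := MeasureTheory.integral_comp_mul_left_Ioi (fun u => Real.exp (-u)) 0 hpos
    simp only [mul_zero, smul_eq_mul] at this
    rw [show (fun s : ℝ => Real.exp (-((d ^ 2 + t ^ 2) * s)))
        = fun s : ℝ => (fun u => Real.exp (-u)) ((d ^ 2 + t ^ 2) * s) from rfl, this,
      integral_exp_neg_Ioi_zero]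
    rw [mul_one, one_div]
  have hint : ∀ (δ : ℝ), MeasureTheory.IntegrableOn
      (fun s => Real.exp (-(d ^ 2 * s)) * Real.exp (-(s * δ ^ 2))) (Set.Ioi (0 : ℝ)) := by
    intro δ
    have h1 : 0 < d ^ 2 + δ ^ 2 := by positivity
    refine (exp_neg_integrableOn_Ioi 0 h1).congr_fun (fun s _ => ?_) measurableSet_Ioi
    rw [← Real.exp_add]
    ring_nf
  have swap : ∑ i, ∑ j, v i * v j * (1 / (d ^ 2 + (x i - x j) ^ 2))
      = ∫ s in Set.Ioi (0 : ℝ), ∑ i, ∑ j,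
          v i * v j * (Real.exp (-(d ^ 2 * s)) * Real.exp (-(s * (x i - x j) ^ 2))) := by
    rw [MeasureTheory.integral_finset_sum _
      (fun i _ => MeasureTheory.integrable_finset_sum _
        (fun j _ => ((hint ((x i - x j))).const_mul (v i * v j))))]
    refine Finset.sum_congr rfl fun i _ => ?_
    rw [MeasureTheory.integral_finset_sum _
      (fun j _ => ((hint ((x i - x j))).const_mul (v i * v j)))]
    refine Finset.sum_congr rfl fun j _ => ?_
    rw [MeasureTheory.integral_const_mul, key]
  rw [swap]
  refine MeasureTheory.setIntegral_nonneg measurableSet_Ioi fun s hs => ?_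
  have hrw : ∑ i, ∑ j, v i * v j * (Real.exp (-(d ^ 2 * s)) * Real.exp (-(s * (x i - x j) ^ 2)))
      = Real.exp (-(d ^ 2 * s)) * ∑ i, ∑ j, v i * v j * Real.exp (-(s * (x i - x j) ^ 2)) := by
    rw [Finset.mul_sum]
    refine Finset.sum_congr rfl fun i _ => ?_
    rw [Finset.mul_sum]
    exact Finset.sum_congr rfl fun j _ => by ring
  rw [hrw]
  exact mul_nonneg (Real.exp_nonneg _) ((myPD_gauss x (le_of_lt hs)).2 v)

lemma myPD_mul {x : Fin n → ℝ} {f g : ℝ → ℝ} (hf : MyPD n x f) (hg : MyPD n x g) :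
    MyPD n x (fun t => f t * g t) := by
  classical
  refine ⟨fun t => by show f (-t) * g (-t) = f t * g t; rw [hf.1, hg.1], fun v => ?_⟩
  set G : Matrix (Fin n) (Fin n) ℝ := Matrix.of fun i j => g (x i - x j) with hG
  have hherm : G.IsHermitian := by
    ext i j
    simp only [Matrix.conjTranspose_apply, hG, Matrix.of_apply, star_trivial]
    rw [← neg_sub (x i) (x j), hg.1]
  have hpsd : G.PosSemidef := by
    refine Matrix.posSemidef_iff_dotProduct_mulVec.mpr ⟨hherm, fun y => ?_⟩
    have e : star y ⬝ᵥ G.mulVec y = ∑ i, ∑ j, y i * y j * g (x i - x j) := by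
      simp only [dotProduct, Matrix.mulVec, dotProduct, hG, Matrix.of_apply,
        Pi.star_apply, star_trivial, Finset.mul_sum]
      exact Finset.sum_congr rfl fun i _ => Finset.sum_congr rfl fun j _ => by ring
    rw [e]
    exact hg.2 y
  obtain ⟨m, B, hB⟩ := Matrix.posSemidef_iff_eq_sum_vecMulVec.mp hpsd
  have hgent : ∀ i j : Fin n, g (x i - x j) = ∑ k, B k i * B k j := by
    intro i j
    have h := congrArg (fun M => M i j) hB
    simpa [hG, Matrix.sum_apply, Matrix.vecMulVec_apply, star_trivial] using h
  have step : ∀ i j : Fin n, v i * v j * (f (x i - x j) * g (x i - x j))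
      = ∑ k, (v i * B k i) * ((v j * B k j) * f (x i - x j)) := by
    intro i j
    rw [hgent i j, Finset.mul_sum, Finset.mul_sum]
    exact Finset.sum_congr rfl fun k _ => by ring
  calc ∑ i, ∑ j, v i * v j * (f (x i - x j) * g (x i - x j))
      = ∑ i, ∑ j, ∑ k, (v i * B k i) * ((v j * B k j) * f (x i - x j)) :=
        Finset.sum_congr rfl fun i _ => Finset.sum_congr rfl fun j _ => step i j
    _ = ∑ k, ∑ i, ∑ j, (v i * B k i) * ((v j * B k j) * f (x i - x j)) := by
        rw [show (∑ i, ∑ j, ∑ k, (v i * B k i) * ((v j * B k j) * f (x i - x j)))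
            = ∑ i, ∑ k, ∑ j, (v i * B k i) * ((v j * B k j) * f (x i - x j)) from
          Finset.sum_congr rfl fun i _ => Finset.sum_comm]
        exact Finset.sum_comm
    _ ≥ 0 := by
        refine Finset.sum_nonneg fun k _ => ?_
        have h := hf.2 (fun i => v i * B k i)
        refine le_trans h (le_of_eq ?_)
        exact Finset.sum_congr rfl fun i _ => Finset.sum_congr rfl fun j _ => by ring

lemma myPD_limit {x : Fin n → ℝ} {F : ℕ → ℝ → ℝ} {f : ℝ → ℝ}
    (hF : ∀ N, MyPD n x (F N))
    (hlim : ∀ t, Tendsto (fun N => F N t) atTop (𝓝 (f t))) :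
    MyPD n x f := by
  constructor
  · intro t
    exact tendsto_nhds_unique (hlim (-t)) ((hlim t).congr fun N => ((hF N).1 t).symm)
  · intro v
    have h1 : Tendsto (fun N => ∑ i, ∑ j, v i * v j * F N (x i - x j)) atTop
        (𝓝 (∑ i, ∑ j, v i * v j * f (x i - x j))) := by
      refine tendsto_finset_sum _ fun i _ => tendsto_finset_sum _ fun j _ => ?_
      exact (hlim _).const_mul _
    exact ge_of_tendsto' h1 fun N => (hF N).2 v

lemma sinh_euler (t : ℝ) :
    Tendsto (fun N : ℕ => π * t * ∏ j ∈ Finset.range N, (1 + t ^ 2 / ((j : ℝ) + 1) ^ 2))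
      atTop (𝓝 (Real.sinh (π * t))) := by
  have h := Complex.tendsto_euler_sin_prod ((t : ℂ) * Complex.I)
  have heq : ∀ N : ℕ,
      ((π * t * ∏ j ∈ Finset.range N, (1 + t ^ 2 / ((j : ℝ) + 1) ^ 2) : ℝ) : ℂ) * Complex.I
      = ↑π * ((t : ℂ) * Complex.I) *
          ∏ j ∈ Finset.range N, (1 - ((t : ℂ) * Complex.I) ^ 2 / ((j : ℂ) + 1) ^ 2) := by
    intro N
    have hfac : ∀ j : ℕ, (1 : ℂ) - ((t : ℂ) * Complex.I) ^ 2 / ((j : ℂ) + 1) ^ 2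
        = (((1 + t ^ 2 / ((j : ℝ) + 1) ^ 2 : ℝ)) : ℂ) := by
      intro j
      push_cast
      rw [mul_pow, Complex.I_sq]
      ring
    rw [Finset.prod_congr rfl (fun j _ => hfac j), ← Complex.ofReal_prod]
    push_cast
    ring
  have h2 : Tendsto (fun N : ℕ =>
      ((π * t * ∏ j ∈ Finset.range N, (1 + t ^ 2 / ((j : ℝ) + 1) ^ 2) : ℝ) : ℂ) * Complex.I)
      atTop (𝓝 (Complex.sin (↑π * ((t : ℂ) * Complex.I)))) :=
    h.congr fun N => (heq N).symm
  have h3 : Complex.sin (↑π * ((t : ℂ) * Complex.I)) = ((Real.sinh (π * t) : ℝ) : ℂ) * Complex.I := by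
    rw [show (↑π * ((t : ℂ) * Complex.I)) = ((π * t : ℝ) : ℂ) * Complex.I by push_cast; ring,
      Complex.sin_mul_I, Complex.ofReal_sinh]
  rw [h3] at h2
  have h4 := (Complex.continuous_im.tendsto _).comp h2
  have h6 : (((Real.sinh (π * t) : ℝ) : ℂ) * Complex.I).im = Real.sinh (π * t) := by
    rw [Complex.mul_I_im, Complex.ofReal_re]
  rw [h6] at h4
  refine Filter.Tendsto.congr (fun N => ?_) h4
  show ((((π * t * ∏ j ∈ Finset.range N, (1 + t ^ 2 / ((j : ℝ) + 1) ^ 2) : ℝ)) : ℂ)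
      * Complex.I).im = _
  rw [Complex.mul_I_im, Complex.ofReal_re]

end aux

open Finset Filter Topology in
theorem g_omega_posdef (b ω : ℝ) (hb : 0 < b) (hω : ω ∈ Set.Ioo 0 π)
    (g : ℝ → ℝ)
    (hg : ∀ x : ℝ, g x = if x = 0 then 1
      else (π / ω) * Real.sinh (ω * x / b) / Real.sinh (π * x / b))
    (n : ℕ) (x : Fin n → ℝ) (c : Fin n → ℂ) :
    0 ≤ ∑ i, ∑ j, c i * (starRingEnd ℂ) (c j) * (g (x i - x j) : ℂ) := by
  have hω0 : 0 < ω := hω.1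
  have hωπ : ω < π := hω.2
  have hπ : (0 : ℝ) < π := Real.pi_pos
  -- the factors of the Euler product
  set φ : ℕ → ℝ → ℝ := fun j X =>
    (((j : ℝ) + 1) ^ 2 * b ^ 2 + (ω / π) ^ 2 * X ^ 2) / (((j : ℝ) + 1) ^ 2 * b ^ 2 + X ^ 2)
    with hφdef
  -- each factor is PD
  have hr1 : (0 : ℝ) ≤ (ω / π) ^ 2 := sq_nonneg _
  have hr2 : (0 : ℝ) ≤ 1 - (ω / π) ^ 2 := by
    have h1 : ω / π < 1 := (div_lt_one hπ).mpr hωπ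
    have h0 : 0 < ω / π := div_pos hω0 hπ
    nlinarith
  have hφpd : ∀ j : ℕ, MyPD n x (φ j) := by
    intro j
    have hd : (0 : ℝ) < ((j : ℝ) + 1) * b := by positivity
    have base := myPD_add (myPD_const x hr1)
      (myPD_smul hr2 (myPD_smul (sq_nonneg (((j : ℝ) + 1) * b)) (myPD_inv x hd)))
    have heq : ∀ t : ℝ, (ω / π) ^ 2 + (1 - (ω / π) ^ 2)
          * ((((j : ℝ) + 1) * b) ^ 2 * (1 / ((((j : ℝ) + 1) * b) ^ 2 + t ^ 2)))
        = (((j : ℝ) + 1) ^ 2 * b ^ 2 + (ω / π) ^ 2 * t ^ 2)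
            / (((j : ℝ) + 1) ^ 2 * b ^ 2 + t ^ 2) := by
      intro t
      have hden : (0 : ℝ) < ((j : ℝ) + 1) ^ 2 * b ^ 2 + t ^ 2 := by positivity
      have hden' : (((j : ℝ) + 1) * b) ^ 2 + t ^ 2 = ((j : ℝ) + 1) ^ 2 * b ^ 2 + t ^ 2 := by ring
      rw [hden']
      field_simp
      ring
    exact myPD_congr base heq
  -- products of factors are PD
  have hprodpd : ∀ N : ℕ, MyPD n x (fun X => ∏ j ∈ Finset.range N, φ j X) := by
    intro N
    induction N with
    | zero => exact myPD_congr (myPD_const x zero_le_one) fun t => by simp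
    | succ N ih =>
        refine myPD_congr (myPD_mul ih (hφpd N)) fun t => ?_
        rw [Finset.prod_range_succ]
  -- pointwise convergence of the products to g
  have hlim : ∀ X : ℝ, Tendsto (fun N => ∏ j ∈ Finset.range N, φ j X) atTop (𝓝 (g X)) := by
    intro X
    rcases eq_or_ne X 0 with hX | hX
    · have hconst : ∀ N : ℕ, ∏ j ∈ Finset.range N, φ j X = 1 := by
        intro N
        refine Finset.prod_eq_one fun j _ => ?_
        simp only [hφdef, hX]
        have : (0 : ℝ) < ((j : ℝ) + 1) ^ 2 * b ^ 2 := by positivity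
        field_simp
        ring
      rw [hg X, if_pos hX]
      simpa [hconst] using (tendsto_const_nhds : Tendsto (fun _ : ℕ => (1 : ℝ)) atTop (𝓝 1))
    · set t₁ : ℝ := ω * X / (π * b) with ht₁
      set t₂ : ℝ := X / b with ht₂
      have hb' : b ≠ 0 := ne_of_gt hb
      have hπ' : (π : ℝ) ≠ 0 := ne_of_gt hπ
      have hω' : ω ≠ 0 := ne_of_gt hω0
      have ht₁0 : t₁ ≠ 0 := by
        simp only [ht₁]
        exact div_ne_zero (mul_ne_zero hω' hX) (mul_ne_zero hπ' hb')
      have ht₂0 : t₂ ≠ 0 := by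
        simp only [ht₂]
        exact div_ne_zero hX hb'
      have hP2pos : ∀ N : ℕ, 0 < ∏ j ∈ Finset.range N, (1 + t₂ ^ 2 / ((j : ℝ) + 1) ^ 2) := by
        intro N
        refine Finset.prod_pos fun j _ => ?_
        positivity
      have hfaceq : ∀ j : ℕ, φ j X
          = (1 + t₁ ^ 2 / ((j : ℝ) + 1) ^ 2) / (1 + t₂ ^ 2 / ((j : ℝ) + 1) ^ 2) := by
        intro j
        simp only [hφdef, ht₁, ht₂]
        have h1 : (0 : ℝ) < ((j : ℝ) + 1) ^ 2 * b ^ 2 + X ^ 2 := by positivity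
        have h2 : (0 : ℝ) < ((j : ℝ) + 1) ^ 2 := by positivity
        rw [div_eq_div_iff (ne_of_gt h1) (by positivity)]
        field_simp
      have hprodeq : ∀ N : ℕ, ∏ j ∈ Finset.range N, φ j X
          = (π * t₁ * ∏ j ∈ Finset.range N, (1 + t₁ ^ 2 / ((j : ℝ) + 1) ^ 2))
            / (π * t₂ * ∏ j ∈ Finset.range N, (1 + t₂ ^ 2 / ((j : ℝ) + 1) ^ 2))
            * ((π * t₂) / (π * t₁)) := by
        intro N
        rw [Finset.prod_congr rfl fun j _ => hfaceq j, Finset.prod_div_distrib]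
        have hP2 := ne_of_gt (hP2pos N)
        field_simp
      have hsinh2 : Real.sinh (π * t₂) ≠ 0 := by
        rw [Real.sinh_ne_zero]
        exact mul_ne_zero hπ' ht₂0
      have htend : Tendsto (fun N : ℕ =>
          (π * t₁ * ∏ j ∈ Finset.range N, (1 + t₁ ^ 2 / ((j : ℝ) + 1) ^ 2))
            / (π * t₂ * ∏ j ∈ Finset.range N, (1 + t₂ ^ 2 / ((j : ℝ) + 1) ^ 2))
            * ((π * t₂) / (π * t₁))) atTop
          (𝓝 (Real.sinh (π * t₁) / Real.sinh (π * t₂) * ((π * t₂) / (π * t₁)))) :=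
        (((sinh_euler t₁).div (sinh_euler t₂) hsinh2).mul_const _)
      have hval : Real.sinh (π * t₁) / Real.sinh (π * t₂) * ((π * t₂) / (π * t₁)) = g X := by
        rw [hg X, if_neg hX]
        have e1 : π * t₁ = ω * X / b := by
          simp only [ht₁]
          field_simp
        have e2 : π * t₂ = π * X / b := by
          simp only [ht₂]
          field_simp
        rw [e1, e2]
        have hs2 : Real.sinh (π * X / b) ≠ 0 := by
          rw [Real.sinh_ne_zero]
          positivity
        field_simp
      rw [← hval]
      exact Tendsto.congr (fun N => (hprodeq N).symm) htend
  have hPD : MyPD n x g := myPD_limit hprodpd hlim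
  -- assemble the complex statement
  rw [Complex.le_def]
  constructor
  · rw [Complex.zero_re]
    have hre : (∑ i, ∑ j, c i * (starRingEnd ℂ) (c j) * (g (x i - x j) : ℂ)).re
        = ∑ i, ∑ j, ((c i).re * (c j).re * g (x i - x j)
            + (c i).im * (c j).im * g (x i - x j)) := by
      rw [Complex.re_sum]
      refine Finset.sum_congr rfl fun i _ => ?_
      rw [Complex.re_sum]
      refine Finset.sum_congr rfl fun j _ => ?_
      simp [Complex.mul_re, Complex.mul_im]
      ring
    rw [hre]
    have hsplit : ∑ i, ∑ j, ((c i).re * (c j).re * g (x i - x j)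
            + (c i).im * (c j).im * g (x i - x j))
        = (∑ i, ∑ j, (c i).re * (c j).re * g (x i - x j))
          + ∑ i, ∑ j, (c i).im * (c j).im * g (x i - x j) := by
      rw [← Finset.sum_add_distrib]
      refine Finset.sum_congr rfl fun i _ => ?_
      rw [← Finset.sum_add_distrib]
    rw [hsplit]
    exact add_nonneg (hPD.2 fun i => (c i).re) (hPD.2 fun i => (c i).im)
  · rw [Complex.zero_im]
    have hsymm : ∀ i j : Fin n, g (x j - x i) = g (x i - x j) := by
      intro i j
      rw [← neg_sub (x i) (x j), hPD.1]
    have him : (∑ i, ∑ j, c i * (starRingEnd ℂ) (c j) * (g (x i - x j) : ℂ)).im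
        = ∑ i, ∑ j, ((c i).im * (c j).re * g (x i - x j)
            - (c i).re * (c j).im * g (x i - x j)) := by
      rw [Complex.im_sum]
      refine Finset.sum_congr rfl fun i _ => ?_
      rw [Complex.im_sum]
      refine Finset.sum_congr rfl fun j _ => ?_
      simp [Complex.mul_re, Complex.mul_im]
      ring
    rw [him]
    have hswap : ∑ i, ∑ j, (c i).im * (c j).re * g (x i - x j)
        = ∑ i, ∑ j, (c i).re * (c j).im * g (x i - x j) := by
      rw [Finset.sum_comm]
      refine Finset.sum_congr rfl fun j _ => Finset.sum_congr rfl fun i _ => ?_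
      rw [hsymm j i]
      ring
    have : ∑ i, ∑ j, ((c i).im * (c j).re * g (x i - x j)
            - (c i).re * (c j).im * g (x i - x j))
        = (∑ i, ∑ j, (c i).im * (c j).re * g (x i - x j))
          - ∑ i, ∑ j, (c i).re * (c j).im * g (x i - x j) := by
      rw [← Finset.sum_sub_distrib]
      refine Finset.sum_congr rfl fun i _ => ?_
      rw [← Finset.sum_sub_distrib]
    rw [this, hswap, sub_self]
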